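/- The map f : CH^n → C^n, f(z) = z / sqrt(1 - ||z||^2), satisfies f^*(ω_0) = ω_hyp, where ω_0 = (i/2) Σ_j dz_j ∧ dz̄_j is the standard symplectic form on C^n and ω_hyp = -(i/2) ∂∂̄ log(1 - Σ_j |z_j|^2) is the hyperbolic Kähler form on the unit ball CH^n. -/

import Mathlib

open InnerProductSpace

open InnerProductSpace

variable {n : ℕ}

noncomputable def Br (n : ℕ) : EuclideanSpace ℂ (Fin n) →L[ℝ] EuclideanSpace ℂ (Fin n) →L[ℝ] ℝ :=
  LinearMap.mkContinuous₂
    (LinearMap.mk₂ ℝ (fun x y => ⟪x, y⟫_ℝ)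
      (fun x y z => inner_add_left x y z)
      (fun r x y => real_inner_smul_left x y r)
      (fun x y z => inner_add_right x y z)
      (fun r x y => real_inner_smul_right x y r))
    1 (fun x y => by simpa using abs_real_inner_le_norm x y)

@[simp] lemma Br_apply (x y : EuclideanSpace ℂ (Fin n)) : Br n x y = ⟪x, y⟫_ℝ := rfl

theorem hasFDerivAt_nsq (y : EuclideanSpace ℂ (Fin n)) :
    HasFDerivAt (fun y : EuclideanSpace ℂ (Fin n) => ‖y‖ ^ 2) ((2:ℝ) • Br n y) y := by
  have h := (hasFDerivAt_id y).inner ℝ (hasFDerivAt_id y)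
  have h2 : HasFDerivAt (fun y : EuclideanSpace ℂ (Fin n) => ‖y‖ ^ 2)
      ((fderivInnerCLM ℝ (id y, id y)).comp
        ((ContinuousLinearMap.id ℝ _).prod (ContinuousLinearMap.id ℝ _))) y := by
    refine h.congr_of_eventuallyEq (Filter.Eventually.of_forall fun t => ?_)
    exact (real_inner_self_eq_norm_sq t).symm
  refine h2.congr_fderiv ?_
  ext u
  simp [real_inner_comm, two_mul]

theorem hess_nsq (p : EuclideanSpace ℂ (Fin n)) :
    fderiv ℝ (fderiv ℝ (fun y : EuclideanSpace ℂ (Fin n) => ‖y‖ ^ 2)) p = (2:ℝ) • Br n := by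
  have h1 : (fderiv ℝ (fun y : EuclideanSpace ℂ (Fin n) => ‖y‖ ^ 2)) = ⇑((2:ℝ) • Br n) := by
    funext y
    rw [(hasFDerivAt_nsq y).fderiv]
    simp
  rw [h1]
  exact ContinuousLinearMap.fderiv _

theorem hasFDerivAt_f {f : EuclideanSpace ℂ (Fin n) → EuclideanSpace ℂ (Fin n)}
    (hf : ∀ z, f z = (Real.sqrt (1 - ‖z‖ ^ 2))⁻¹ • z)
    (z : EuclideanSpace ℂ (Fin n)) (hz : ‖z‖ < 1) :
    HasFDerivAt f ((Real.sqrt (1 - ‖z‖ ^ 2))⁻¹ • ContinuousLinearMap.id ℝ _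
      + ((((Real.sqrt (1 - ‖z‖ ^ 2))⁻¹ * (1 - ‖z‖ ^ 2)⁻¹) • Br n z).smulRight z)) z := by
  have hs : 0 < 1 - ‖z‖ ^ 2 := by nlinarith [norm_nonneg z]
  have hsq : 0 < Real.sqrt (1 - ‖z‖ ^ 2) := Real.sqrt_pos.mpr hs
  have hu : HasFDerivAt (fun y : EuclideanSpace ℂ (Fin n) => 1 - ‖y‖ ^ 2)
      (-((2:ℝ) • Br n z)) z := (hasFDerivAt_nsq z).const_sub 1
  have hsqrt : HasDerivAt Real.sqrt (1 / (2 * Real.sqrt (1 - ‖z‖ ^ 2))) (1 - ‖z‖ ^ 2) :=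
    Real.hasDerivAt_sqrt hs.ne'
  have hginv : HasDerivAt (fun t : ℝ => (Real.sqrt t)⁻¹)
      (-(1 / (2 * Real.sqrt (1 - ‖z‖ ^ 2))) / Real.sqrt (1 - ‖z‖ ^ 2) ^ 2) (1 - ‖z‖ ^ 2) :=
    hsqrt.inv hsq.ne'
  have hg : HasFDerivAt (fun y : EuclideanSpace ℂ (Fin n) => (Real.sqrt (1 - ‖y‖ ^ 2))⁻¹)
      ((-(1 / (2 * Real.sqrt (1 - ‖z‖ ^ 2))) / Real.sqrt (1 - ‖z‖ ^ 2) ^ 2) •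
        -((2:ℝ) • Br n z)) z := hginv.comp_hasFDerivAt (h₂ := fun t : ℝ => (Real.sqrt t)⁻¹)
        (f := fun y : EuclideanSpace ℂ (Fin n) => 1 - ‖y‖ ^ 2) z hu
  have heq : ((-(1 / (2 * Real.sqrt (1 - ‖z‖ ^ 2))) / Real.sqrt (1 - ‖z‖ ^ 2) ^ 2) •
      -((2:ℝ) • Br n z)) = ((Real.sqrt (1 - ‖z‖ ^ 2))⁻¹ * (1 - ‖z‖ ^ 2)⁻¹) • Br n z := by
    ext u
    simp only [ContinuousLinearMap.coe_smul', Pi.smul_apply,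
      ContinuousLinearMap.neg_apply, ContinuousLinearMap.smul_apply, Br_apply, smul_eq_mul]
    rw [Real.sq_sqrt hs.le]
    field_simp
  rw [heq] at hg
  have h := hg.smul (hasFDerivAt_id z)
  have hfe : f = fun y => (Real.sqrt (1 - ‖y‖ ^ 2))⁻¹ • y := funext hf
  rw [hfe]
  exact h

theorem hasFDerivAt_phi (y : EuclideanSpace ℂ (Fin n)) (hy : ‖y‖ < 1) :
    HasFDerivAt (fun y : EuclideanSpace ℂ (Fin n) => -Real.log (1 - ‖y‖ ^ 2))
      ((2 * (1 - ‖y‖ ^ 2)⁻¹) • Br n y) y := by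
  have hs : 0 < 1 - ‖y‖ ^ 2 := by nlinarith [norm_nonneg y]
  have hu : HasFDerivAt (fun y : EuclideanSpace ℂ (Fin n) => 1 - ‖y‖ ^ 2)
      (-((2:ℝ) • Br n y)) y := (hasFDerivAt_nsq y).const_sub 1
  have hlog : HasDerivAt Real.log (1 - ‖y‖ ^ 2)⁻¹ (1 - ‖y‖ ^ 2) := Real.hasDerivAt_log hs.ne'
  have h := (hlog.comp_hasFDerivAt y hu).neg
  refine h.congr_fderiv ?_
  ext u
  simp only [ContinuousLinearMap.coe_smul', Pi.smul_apply, ContinuousLinearMap.neg_apply,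
    ContinuousLinearMap.smul_apply, Br_apply, smul_eq_mul]
  ring

theorem hess_phi (z : EuclideanSpace ℂ (Fin n)) (hz : ‖z‖ < 1)
    (u w : EuclideanSpace ℂ (Fin n)) :
    fderiv ℝ (fderiv ℝ (fun y : EuclideanSpace ℂ (Fin n) => -Real.log (1 - ‖y‖ ^ 2))) z u w
      = 2 * (1 - ‖z‖ ^ 2)⁻¹ * ⟪u, w⟫_ℝ
        + 4 * ((1 - ‖z‖ ^ 2)⁻¹ * (1 - ‖z‖ ^ 2)⁻¹) * (⟪z, u⟫_ℝ * ⟪z, w⟫_ℝ) := by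
  have hs : 0 < 1 - ‖z‖ ^ 2 := by nlinarith [norm_nonneg z]
  have hball : ∀ᶠ y in nhds z, ‖y‖ < 1 :=
    Filter.eventually_iff.mpr ((isOpen_lt continuous_norm continuous_const).mem_nhds hz)
  have hev : fderiv ℝ (fun y : EuclideanSpace ℂ (Fin n) => -Real.log (1 - ‖y‖ ^ 2))
      =ᶠ[nhds z] fun y => (2 * (1 - ‖y‖ ^ 2)⁻¹) • Br n y := by
    filter_upwards [hball] with y hy
    exact (hasFDerivAt_phi y hy).fderiv
  rw [hev.fderiv_eq]
  have hu : HasFDerivAt (fun y : EuclideanSpace ℂ (Fin n) => 1 - ‖y‖ ^ 2)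
      (-((2:ℝ) • Br n z)) z := (hasFDerivAt_nsq z).const_sub 1
  have hinv : HasDerivAt (fun t : ℝ => 2 * t⁻¹) (2 * -(((1 - ‖z‖ ^ 2)) ^ 2)⁻¹)
      (1 - ‖z‖ ^ 2) := (hasDerivAt_inv hs.ne').const_mul 2
  have hc : HasFDerivAt (fun y : EuclideanSpace ℂ (Fin n) => 2 * (1 - ‖y‖ ^ 2)⁻¹)
      ((2 * -(((1 - ‖z‖ ^ 2)) ^ 2)⁻¹) • -((2:ℝ) • Br n z)) z :=
    hinv.comp_hasFDerivAt (h₂ := fun t : ℝ => 2 * t⁻¹)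
      (f := fun y : EuclideanSpace ℂ (Fin n) => 1 - ‖y‖ ^ 2) z hu
  have hG : HasFDerivAt (fun y : EuclideanSpace ℂ (Fin n) => (2 * (1 - ‖y‖ ^ 2)⁻¹) • Br n y) _ z :=
    hc.smul (Br n).hasFDerivAt
  rw [hG.fderiv]
  simp only [ContinuousLinearMap.add_apply, ContinuousLinearMap.coe_smul', Pi.smul_apply,
    ContinuousLinearMap.smulRight_apply, ContinuousLinearMap.smul_apply,
    ContinuousLinearMap.neg_apply, Br_apply, smul_eq_mul, ContinuousLinearMap.coe_sub',
    Pi.sub_apply]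
  field_simp
  ring

theorem re_inner (x y : EuclideanSpace ℂ (Fin n)) : ⟪x, y⟫_ℝ = Complex.re (⟪x, y⟫_ℂ) := by
  simp [PiLp.inner_apply, Complex.re_sum]

theorem skew (u v : EuclideanSpace ℂ (Fin n)) :
    ⟪u, Complex.I • v⟫_ℝ = -⟪Complex.I • u, v⟫_ℝ := by
  rw [re_inner, re_inner, inner_smul_left, inner_smul_right]
  simp [Complex.mul_re]

theorem Iz_z (z : EuclideanSpace ℂ (Fin n)) : ⟪Complex.I • z, z⟫_ℝ = 0 := by
  rw [re_inner, inner_smul_left]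
  simp [Complex.mul_re]
  norm_cast

theorem I_smul_real (r : ℝ) (x : EuclideanSpace ℂ (Fin n)) :
    Complex.I • (r • x) = r • (Complex.I • x) := smul_comm _ _ _



/-- The Kähler 2-form `(i/2)∂∂̄Φ` associated to a potential `Φ`, evaluated at the
point `z` on tangent vectors `v, w`:
`ω_Φ(z)(v,w) = (1/4)(D²Φ(z)(Jv, w) - D²Φ(z)(v, Jw))` where `J` is multiplication by `i`. -/
noncomputable def kform (n : ℕ) (Φ : EuclideanSpace ℂ (Fin n) → ℝ)
    (z v w : EuclideanSpace ℂ (Fin n)) : ℝ :=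
  (1 / 4) * (fderiv ℝ (fderiv ℝ Φ) z (Complex.I • v) w
    - fderiv ℝ (fderiv ℝ Φ) z v (Complex.I • w))

/-- The map `f : ℂHⁿ → ℂⁿ`, `f z = z / √(1 - ‖z‖²)`, satisfies `f^*(ω₀) = ω_hyp`,
where `ω₀` has potential `‖w‖²` and `ω_hyp` has potential `-log(1 - ‖z‖²)`. -/
theorem stmt_1 (n : ℕ)
    (f : EuclideanSpace ℂ (Fin n) → EuclideanSpace ℂ (Fin n))
    (hf : ∀ z, f z = (Real.sqrt (1 - ‖z‖ ^ 2))⁻¹ • z) :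
    ∀ z : EuclideanSpace ℂ (Fin n), ‖z‖ < 1 → ∀ v w,
      kform n (fun y => ‖y‖ ^ 2) (f z) (fderiv ℝ f z v) (fderiv ℝ f z w)
        = kform n (fun y => -Real.log (1 - ‖y‖ ^ 2)) z v w := by
  intro z hz v w
  have hs : 0 < 1 - ‖z‖ ^ 2 := by nlinarith [norm_nonneg z]
  simp only [kform]
  rw [hess_nsq, (hasFDerivAt_f hf z hz).fderiv, hess_phi z hz (Complex.I • v) w,
    hess_phi z hz v (Complex.I • w)]
  simp only [ContinuousLinearMap.add_apply, ContinuousLinearMap.coe_smul', Pi.smul_apply,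
    ContinuousLinearMap.smulRight_apply, ContinuousLinearMap.smul_apply,
    ContinuousLinearMap.coe_id', id_eq, Br_apply, smul_eq_mul]
  simp only [smul_add, I_smul_real, inner_add_left, inner_add_right, real_inner_smul_left,
    real_inner_smul_right, skew, Iz_z, mul_neg, neg_neg, mul_zero, neg_zero, add_zero]
  rw [show ⟪Complex.I • v, z⟫_ℝ = -⟪Complex.I • z, v⟫_ℝ by rw [real_inner_comm]; exact skew z v]
  have haa : (Real.sqrt (1 - ‖z‖ ^ 2))⁻¹ * (Real.sqrt (1 - ‖z‖ ^ 2))⁻¹ = (1 - ‖z‖ ^ 2)⁻¹ := by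
    rw [← mul_inv, Real.mul_self_sqrt hs.le]
  linear_combination (⟪Complex.I • v, w⟫_ℝ + (1 - ‖z‖ ^ 2)⁻¹ * (⟪z, v⟫_ℝ * ⟪Complex.I • z, w⟫_ℝ
    - ⟪z, w⟫_ℝ * ⟪Complex.I • z, v⟫_ℝ)) * haa
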